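/- Let F satisfy (A1)–(A2) and let τ > 0 with ατ < 1/2. Define J_τ(s) = s + τ s F'(s) + (τ²/4) s (F'(s))² for s ≥ 0. Then J_τ'(s) ≥ 1 − ατ + τ s F''(s)(1 − ατ/2) ≥ 1/2 for all s > 0; in particular J_τ is strictly increasing on [0,∞). -/

import Mathlib

open Real Set

/-- for `J_τ(s) = s + τ s F'(s) + (τ²/4) s F'(s)²` and `ατ < 1/2`,
`J_τ'(s) ≥ 1 − ατ + τ s F''(s)(1 − ατ/2) ≥ 1/2` for all `s > 0`, and `J_τ` is strictly
increasing on `[0,∞)`. -/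
theorem stmt11 (F : ℝ → ℝ) (α β r : ℝ) (hα : 0 ≤ α) (hβ : 0 < β) (hr : 1 < r)
    (hF1 : ContDiffOn ℝ 1 F (Set.Ici 0)) (hF2 : ContDiffOn ℝ 2 F (Set.Ioi 0))
    (hF'' : ∀ s : ℝ, 0 < s → 0 < deriv (deriv F) s)
    (hFlow : ∀ s : ℝ, 0 < s → β * s ^ (r - 1) - α ≤ deriv F s)
    (τ : ℝ) (hτ : 0 < τ) (hατ : α * τ < 1 / 2) :
    (∀ s : ℝ, 0 < s →
      (1 : ℝ) / 2 ≤ 1 - α * τ + τ * s * deriv (deriv F) s * (1 - α * τ / 2) ∧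
      1 - α * τ + τ * s * deriv (deriv F) s * (1 - α * τ / 2)
        ≤ deriv (fun t : ℝ => t + τ * t * deriv F t + τ ^ 2 / 4 * t * (deriv F t) ^ 2) s) ∧
    StrictMonoOn (fun t : ℝ => t + τ * t * deriv F t + τ ^ 2 / 4 * t * (deriv F t) ^ 2)
      (Set.Ici 0) := by
  set J : ℝ → ℝ := fun t : ℝ => t + τ * t * deriv F t + τ ^ 2 / 4 * t * (deriv F t) ^ 2
    with hJ
  -- deriv F is C¹ on Ioi 0
  have hg : ContDiffOn ℝ 1 (deriv F) (Set.Ioi 0) := by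
    have := hF2.deriv_of_isOpen (m := 1) isOpen_Ioi (by norm_num)
    exact this.of_le (by norm_num)
  -- key derivative computation and bounds
  have key : ∀ s : ℝ, 0 < s →
      (1 : ℝ) / 2 ≤ 1 - α * τ + τ * s * deriv (deriv F) s * (1 - α * τ / 2) ∧
      1 - α * τ + τ * s * deriv (deriv F) s * (1 - α * τ / 2) ≤ deriv J s := by
    intro s hs
    have hmem : s ∈ Set.Ioi (0:ℝ) := hs
    have hgd : DifferentiableAt ℝ (deriv F) s :=
      (hg.differentiableOn (by norm_num)).differentiableAt (isOpen_Ioi.mem_nhds hmem)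
    have hG : HasDerivAt (deriv F) (deriv (deriv F) s) s := hgd.hasDerivAt
    have hFd : DifferentiableAt ℝ F s :=
      ((hF2.differentiableOn (by norm_num)).differentiableAt (isOpen_Ioi.mem_nhds hmem))
    have hFda : HasDerivAt F (deriv F s) s := hFd.hasDerivAt
    set A := deriv F s with hA
    set G := deriv (deriv F) s with hGdef
    have hJd : HasDerivAt J
        (1 + τ * (1 * A + s * G) + τ ^ 2 / 4 * (1 * A ^ 2 + s * (2 * A ^ 1 * G))) s := by
      have h1 : HasDerivAt (fun t : ℝ => t) 1 s := hasDerivAt_id s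
      have h2 : HasDerivAt (fun t : ℝ => t * deriv F t) (1 * A + s * G) s :=
        h1.mul hG
      have h3 : HasDerivAt (fun t : ℝ => t * (deriv F t) ^ 2)
          (1 * A ^ 2 + s * (2 * A ^ 1 * G)) s := by
        have hsq : HasDerivAt (fun t : ℝ => (deriv F t) ^ 2) (2 * A ^ 1 * G) s := by
          simpa using hG.fun_pow 2
        exact h1.mul hsq
      have h := h1.add ((h2.const_mul τ).add (h3.const_mul (τ ^ 2 / 4)))
      have heq : J = fun x : ℝ =>
          x + (τ * (x * deriv F x) + τ ^ 2 / 4 * (x * (deriv F x) ^ 2)) := by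
        funext x; simp [hJ]; ring
      rw [heq]
      exact h.congr_deriv (by ring)
    have hderiv : deriv J s
        = 1 + τ * (1 * A + s * G) + τ ^ 2 / 4 * (1 * A ^ 2 + s * (2 * A ^ 1 * G)) :=
      hJd.deriv
    have hGpos : 0 < G := hF'' s hs
    have hApos : -α ≤ A := by
      have h1 := hFlow s hs
      have h2 : 0 < β * s ^ (r - 1) := mul_pos hβ (Real.rpow_pos_of_pos hs _)
      linarith
    constructor
    · nlinarith [mul_pos (mul_pos hτ hs) hGpos]
    · rw [hderiv]
      have h4 : 0 ≤ τ * (A + α) := mul_nonneg hτ.le (by linarith)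
      have h5 : 0 ≤ τ ^ 2 * s * G * (A + α) :=
        mul_nonneg (mul_nonneg (mul_nonneg (sq_nonneg τ) hs.le) hGpos.le) (by linarith)
      nlinarith [sq_nonneg (τ * A)]
  refine ⟨key, ?_⟩
  -- continuity of J on Ici 0
  have hcont : ContinuousOn J (Set.Ici 0) := by
    have hgw : ContinuousOn (derivWithin F (Set.Ici 0)) (Set.Ici 0) :=
      hF1.continuousOn_derivWithin (uniqueDiffOn_Ici 0) le_rfl
    have hcont' : ContinuousOn
        (fun t : ℝ => t + τ * t * derivWithin F (Set.Ici 0) t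
          + τ ^ 2 / 4 * t * (derivWithin F (Set.Ici 0) t) ^ 2) (Set.Ici 0) := by
      fun_prop
    refine hcont'.congr ?_
    intro t ht
    rcases eq_or_lt_of_le (Set.mem_Ici.mp ht) with h0 | h0
    · simp [hJ, ← h0]
    · have : derivWithin F (Set.Ici 0) t = deriv F t :=
        derivWithin_of_mem_nhds (Ici_mem_nhds h0)
      simp [hJ, this]
  exact strictMonoOn_of_deriv_pos (convex_Ici 0) hcont (by
    intro x hx
    rw [interior_Ici] at hx
    have := key x hx
    linarith [this.1, this.2])
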